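/- Under the same conditions (martingale differences ξ_i with E[|ξ_i|^{2+ρ} e^{ξ_i⁺/ε} | 𝓕_{i-1}] ≤ ε^ρ E[ξ_i² | 𝓕_{i-1}] a.s., ρ ∈ (0,1], ε ∈ (0,1/2], and |Σ E[ξ_i²|𝓕_{i-1}] − 1| ≤ δ², δ ∈ [0,1/2]), the cumulant process Ψ_n(λ) = Σ_{i=1}^n log E[e^{λξ_i} | 𝓕_{i-1}] satisfies, for all 0 ≤ λ ≤ 1/ε, |Ψ_n(λ) − λ²/2| ≤ c λ^{2+ρ} ε^ρ + λ²δ²/2 almost surely, for some absolute constant c. -/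

import Mathlib

open MeasureTheory Finset

lemma quad_le_exp {x : ℝ} (hx : 0 ≤ x) : 1 + x + x^2/2 ≤ Real.exp x := by
  have h := Real.sum_le_exp_of_nonneg hx 3
  simp [Finset.sum_range_succ] at h
  linarith

lemma exp_neg_le_quad {x : ℝ} (hx : x ≤ 0) : Real.exp x ≤ 1 + x + x^2/2 := by
  have h1 : 1 + (-x) + (-x)^2/2 ≤ Real.exp (-x) := quad_le_exp (by linarith)
  have h2 : Real.exp x * Real.exp (-x) = 1 := by
    rw [← Real.exp_add]; simp
  nlinarith [Real.exp_pos (-x), Real.exp_pos x, sq_nonneg x, sq_nonneg (x^2)]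

lemma cubic_le_exp_neg {x : ℝ} (hx : x ≤ 0) : 1 + x + x^2/2 + x^3/6 ≤ Real.exp x := by
  have hg : ∀ y : ℝ, HasDerivAt (fun y : ℝ => Real.exp (-y) - 1 + y - y^2/2 + y^3/6)
      (1 - y + y^2/2 - Real.exp (-y)) y := by
    intro y
    have h1 : HasDerivAt (fun y : ℝ => Real.exp (-y)) (-Real.exp (-y)) y := by
      exact ((Real.hasDerivAt_exp (-y)).comp y ((hasDerivAt_id y).neg)).congr_deriv (by simp)
    have := ((((h1.sub_const 1).add (hasDerivAt_id y)).sub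
      ((hasDerivAt_pow 2 y).div_const 2)).add ((hasDerivAt_pow 3 y).div_const 6))
    refine this.congr_deriv ?_
    simp
    ring
  set g : ℝ → ℝ := fun y : ℝ => Real.exp (-y) - 1 + y - y^2/2 + y^3/6 with hgdef
  have hmono : MonotoneOn g (Set.Ici (0:ℝ)) := by
    apply monotoneOn_of_deriv_nonneg (convex_Ici 0)
    · exact (Continuous.continuousOn (by continuity))
    · intro y hy
      exact (hg y).differentiableAt.differentiableWithinAt
    · intro y hy
      rw [(hg y).deriv]
      have : Real.exp (-y) ≤ 1 + (-y) + (-y)^2/2 := by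
        apply exp_neg_le_quad
        simp at hy
        linarith
      nlinarith
  have h0 : g 0 ≤ g (-x) := by
    apply hmono (by simp) (by simp; linarith) (by linarith)
  simp only [hgdef] at h0
  simp at h0
  nlinarith [h0]

lemma log_one_add_ge {t : ℝ} (ht : 0 ≤ t) : t - t^2 ≤ Real.log (1+t) := by
  have hpos : (0:ℝ) < 1 + t := by linarith
  have h := Real.log_le_sub_one_of_pos (inv_pos.2 hpos)
  rw [Real.log_inv] at h
  have hu : (1+t) * (1+t)⁻¹ = 1 := mul_inv_cancel₀ (ne_of_gt hpos)
  have hu0 : (0:ℝ) ≤ (1+t)⁻¹ := inv_nonneg.2 hpos.le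
  nlinarith [h, hu, hu0]

lemma exp_taylor_bound {ρ : ℝ} (hρ0 : 0 < ρ) (hρ1 : ρ ≤ 1) (x : ℝ) :
    |Real.exp x - 1 - x - x^2/2| ≤ |x|^(2+ρ) * Real.exp (max x 0) := by
  have hexp1 : (1:ℝ) ≤ Real.exp (max x 0) := by
    rw [← Real.exp_zero]
    exact Real.exp_le_exp.2 (le_max_right x 0)
  rcases eq_or_ne x 0 with rfl | hx0
  · simp
    positivity
  rcases le_or_gt |x| 1 with h1 | h1
  · -- |x| ≤ 1 : use exp_bound with n = 3
    have hb := Real.exp_bound h1 (by norm_num : 0 < 3)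
    have hsum : ∑ i ∈ Finset.range 3, x^i / i.factorial = 1 + x + x^2/2 := by
      simp [Finset.sum_range_succ]
    rw [hsum] at hb
    have habs : (0:ℝ) < |x| := abs_pos.2 hx0
    have h3 : |x|^(3:ℕ) ≤ |x|^(2+ρ) := by
      have h4 : |x|^(((3:ℕ):ℝ)) ≤ |x|^(2+ρ) :=
        Real.rpow_le_rpow_of_exponent_ge habs h1 (by push_cast; linarith)
      rwa [Real.rpow_natCast] at h4
    have hb2 : |Real.exp x - (1 + x + x^2/2)| ≤ |x|^(3:ℕ) := by
      have : |x|^(3:ℕ) * (((3:ℕ).succ:ℝ)/((3:ℕ).factorial * 3)) ≤ |x|^(3:ℕ) * 1 := by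
        apply mul_le_mul_of_nonneg_left _ (pow_nonneg (abs_nonneg x) 3)
        norm_num [Nat.factorial]
      calc |Real.exp x - (1 + x + x^2/2)| ≤ _ := hb
        _ ≤ |x|^(3:ℕ) := by simpa using this
    calc |Real.exp x - 1 - x - x^2/2| = |Real.exp x - (1 + x + x^2/2)| := by ring_nf
      _ ≤ |x|^(3:ℕ) := hb2
      _ ≤ |x|^(2+ρ) := h3
      _ ≤ |x|^(2+ρ) * Real.exp (max x 0) := le_mul_of_one_le_right (by positivity) hexp1
  · -- |x| > 1
    have hrpow1 : (1:ℝ) ≤ |x|^(2+ρ) := Real.one_le_rpow h1.le (by linarith)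
    rcases lt_or_ge x 0 with hneg | hpos
    · -- x < -1
      have hmax : max x 0 = 0 := max_eq_right hneg.le
      rw [hmax, Real.exp_zero, mul_one]
      have hax : |x| = -x := abs_of_neg hneg
      have hup : Real.exp x - 1 - x - x^2/2 ≤ 0 := by
        have := exp_neg_le_quad hneg.le; linarith
      have hlo : x^3/6 ≤ Real.exp x - 1 - x - x^2/2 := by
        have := cubic_le_exp_neg hneg.le; linarith
      have habs2 : |Real.exp x - 1 - x - x^2/2| ≤ |x|^3/6 := by
        rw [abs_of_nonpos hup, hax]
        nlinarith [hlo]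
      have hsplit : |x|^(2+ρ) = |x|^2 * |x|^ρ := by
        rw [show (2+ρ) = (2:ℝ)+ρ by norm_num, Real.rpow_add (by positivity),
          Real.rpow_two]
      rcases le_or_gt |x| 6 with h6 | h6
      · -- |x| ≤ 6 : |x|^3/6 ≤ |x|^2 ≤ |x|^2 * |x|^ρ
        have h1ρ : (1:ℝ) ≤ |x|^ρ := Real.one_le_rpow h1.le hρ0.le
        calc |Real.exp x - 1 - x - x^2/2| ≤ |x|^3/6 := habs2
          _ ≤ |x|^2 := by nlinarith [abs_nonneg x]
          _ ≤ |x|^2 * |x|^ρ := le_mul_of_one_le_right (by positivity) h1ρ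
          _ = |x|^(2+ρ) := hsplit.symm
      · -- |x| > 6 : crude quadratic bound
        have h1ρ : (1:ℝ) ≤ |x|^ρ := Real.one_le_rpow h1.le hρ0.le
        have hexpx : Real.exp x ≤ 1 := Real.exp_le_one_iff.2 hneg.le
        have habs3 : |Real.exp x - 1 - x - x^2/2| ≤ x^2/2 + (-x) + 1 := by
          rw [abs_of_nonpos hup]
          have := Real.exp_pos x
          nlinarith
        calc |Real.exp x - 1 - x - x^2/2| ≤ x^2/2 + (-x) + 1 := habs3
          _ ≤ |x|^2 := by rw [hax] at h6; rw [sq_abs]; nlinarith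
          _ ≤ |x|^2 * |x|^ρ := le_mul_of_one_le_right (by positivity) h1ρ
          _ = |x|^(2+ρ) := hsplit.symm
    · -- x ≥ 1 (in fact > 1)
      have hmax : max x 0 = x := max_eq_left hpos
      rw [hmax]
      have hq := quad_le_exp hpos
      have hup : Real.exp x - 1 - x - x^2/2 ≤ Real.exp x := by nlinarith
      have hlo : 0 ≤ Real.exp x - 1 - x - x^2/2 := by linarith
      rw [abs_of_nonneg hlo]
      calc Real.exp x - 1 - x - x^2/2 ≤ Real.exp x := hup
        _ = 1 * Real.exp x := (one_mul _).symm
        _ ≤ |x|^(2+ρ) * Real.exp x := by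
            apply mul_le_mul_of_nonneg_right hrpow1 (Real.exp_pos x).le

lemma core_est {Y V lam ε ρ : ℝ} (hρ0 : 0 < ρ) (hρ1 : ρ ≤ 1) (hε : 0 < ε)
    (hlam : 0 < lam) (hle : lam * ε ≤ 1) (hY : 1 ≤ Y) (hV0 : 0 ≤ V) (hVε : V ≤ ε^2)
    (hYV : |Y - (1 + lam^2/2 * V)| ≤ lam^(2+ρ) * ε^ρ * V) :
    |Real.log Y - lam^2/2 * V| ≤ 13/4 * (lam^(2+ρ) * ε^ρ) * V := by
  have hlε : 0 < lam * ε := by positivity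
  set S := (lam*ε)^ρ with hSdef
  clear_value S
  have hS : lam^(2+ρ) * ε^ρ = lam^2 * S := by
    rw [hSdef, Real.mul_rpow hlam.le hε.le, Real.rpow_add hlam,
      show lam^((2:ℝ)) = lam^(2:ℕ) from Real.rpow_two lam]
    ring
  have hS0 : 0 ≤ S := hSdef ▸ Real.rpow_nonneg hlε.le ρ
  have hS1 : S ≤ 1 := hSdef ▸ Real.rpow_le_one hlε.le hle hρ0.le
  have hS2 : (lam*ε)^(2:ℕ) ≤ S := by
    have h := Real.rpow_le_rpow_of_exponent_ge hlε hle (by push_cast; linarith : ρ ≤ ((2:ℕ):ℝ))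
    rw [hSdef]; rwa [Real.rpow_natCast] at h
  set K := lam^(2+ρ) * ε^ρ with hKdef
  clear_value K
  have hK0 : 0 ≤ K := by rw [hKdef]; positivity
  set t := Y - 1 with htdef
  clear_value t
  have ht0 : 0 ≤ t := by simp [htdef]; linarith
  have htu : t ≤ lam^2/2*V + K*V := by
    have := abs_le.1 hYV; simp [htdef]; linarith [this.2]
  have htl : lam^2/2*V - K*V ≤ t := by
    have := abs_le.1 hYV; simp [htdef]; linarith [this.1]
  have hYpos : 0 < Y := by linarith
  have hlogu : Real.log Y ≤ t := by
    simpa [htdef] using Real.log_le_sub_one_of_pos hYpos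
  have hlogl : t - t^2 ≤ Real.log Y := by
    have h := log_one_add_ge ht0
    have : 1 + t = Y := by simp [htdef]
    rwa [this] at h
  have hKle : K ≤ lam^2 := by rw [hS]; nlinarith [sq_nonneg lam]
  have h_a : t ≤ 3/2 * (lam^2 * V) := by nlinarith
  have h_d : lam^2 * V ≤ S := by
    calc lam^2 * V ≤ lam^2 * ε^2 := by nlinarith [sq_nonneg lam]
      _ = (lam*ε)^(2:ℕ) := by ring
      _ ≤ S := hS2
  have ht2 : t^2 ≤ 9/4 * (K * V) := by
    have h_b : t^2 ≤ 9/4 * ((lam^2*V) * (lam^2*V)) := by nlinarith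
    have h_c : (lam^2*V) * (lam^2*V) ≤ (lam^2*V) * S := by
      apply mul_le_mul_of_nonneg_left h_d (by positivity)
    calc t^2 ≤ 9/4 * ((lam^2*V) * (lam^2*V)) := h_b
      _ ≤ 9/4 * ((lam^2*V) * S) := by linarith
      _ = 9/4 * (K * V) := by rw [hS]; ring
  have hKV0 : 0 ≤ K * V := mul_nonneg hK0 hV0
  rw [abs_le]
  constructor
  · linarith [hlogl, htl, ht2, hKV0]
  · linarith [hlogu, htu, hKV0]


lemma holder_step (Ω : Type) (m0 : MeasurableSpace Ω) (μ : Measure Ω) [IsFiniteMeasure μ]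
    (ζ : Ω → ℝ) (hζ : Measurable ζ) (ρ : ℝ) (hρ0 : 0 < ρ) (hρ1 : ρ ≤ 1)
    (hint : Integrable (fun ω => ζ ω^2) μ)
    (hint' : Integrable (fun ω => |ζ ω|^(2+ρ)) μ) :
    ∫ ω, ζ ω^2 ∂μ ≤ (∫ ω, |ζ ω|^(2+ρ) ∂μ)^(2/(2+ρ)) * ((μ Set.univ).toReal)^(ρ/(2+ρ)) := by
  have h2ρ : (0:ℝ) < 2 + ρ := by linarith
  set p := (2+ρ)/2 with hpdef
  set q := (2+ρ)/ρ with hqdef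
  have hp0 : 0 < p := by rw [hpdef]; positivity
  have hpq : p.HolderConjugate q := by
    rw [Real.holderConjugate_iff]
    constructor
    · rw [hpdef]; nlinarith
    · rw [hpdef, hqdef]; field_simp
  have hmF : Measurable (fun ω => ENNReal.ofReal (ζ ω^2)) :=
    (hζ.pow_const 2).ennreal_ofReal
  have key := ENNReal.lintegral_mul_le_Lp_mul_Lq μ hpq hmF.aemeasurable
    (aemeasurable_const : AEMeasurable (fun _ : Ω => (1:ENNReal)) μ)
  simp only [Pi.mul_apply, mul_one, ENNReal.one_rpow, lintegral_one] at key
  have hpt : (fun ω => (ENNReal.ofReal (ζ ω^2))^p)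
      = fun ω => ENNReal.ofReal (|ζ ω|^(2+ρ)) := by
    funext ω
    rw [ENNReal.ofReal_rpow_of_nonneg (sq_nonneg _) hp0.le]
    congr 1
    have h1 : (ζ ω^2 : ℝ) = |ζ ω|^((2:ℝ)) := by
      rw [Real.rpow_two, sq_abs]
    rw [h1, ← Real.rpow_mul (abs_nonneg _)]
    congr 1
    rw [hpdef]; field_simp
  rw [hpt] at key
  have hL1 : ∫⁻ ω, ENNReal.ofReal (ζ ω^2) ∂μ = ENNReal.ofReal (∫ ω, ζ ω^2 ∂μ) :=
    (MeasureTheory.ofReal_integral_eq_lintegral_ofReal hint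
      (Filter.Eventually.of_forall fun ω => sq_nonneg _)).symm
  have hL2 : ∫⁻ ω, ENNReal.ofReal (|ζ ω|^(2+ρ)) ∂μ
      = ENNReal.ofReal (∫ ω, |ζ ω|^(2+ρ) ∂μ) :=
    (MeasureTheory.ofReal_integral_eq_lintegral_ofReal hint'
      (Filter.Eventually.of_forall fun ω => Real.rpow_nonneg (abs_nonneg _) _)).symm
  rw [hL1, hL2] at key
  -- now take toReal
  have hfin : (ENNReal.ofReal (∫ ω, |ζ ω|^(2+ρ) ∂μ))^(1/p) * (μ Set.univ)^(1/q) ≠ ⊤ := by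
    apply ENNReal.mul_ne_top
    · exact ENNReal.rpow_ne_top_of_nonneg (by positivity) ENNReal.ofReal_ne_top
    · exact ENNReal.rpow_ne_top_of_nonneg (by rw [hqdef]; positivity) (measure_ne_top μ _)
  have ht := ENNReal.toReal_mono hfin key
  rw [ENNReal.toReal_mul, ENNReal.toReal_ofReal (integral_nonneg fun ω => sq_nonneg _),
    ← ENNReal.toReal_rpow, ← ENNReal.toReal_rpow,
    ENNReal.toReal_ofReal (integral_nonneg fun ω => Real.rpow_nonneg (abs_nonneg _) _)] at ht
  have e1 : 1/p = 2/(2+ρ) := by rw [hpdef]; field_simp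
  have e2 : 1/q = ρ/(2+ρ) := by rw [hqdef]; field_simp
  rw [e1, e2] at ht
  exact ht

lemma var_le_sq (Ω : Type) (m : MeasurableSpace Ω) (m0 : MeasurableSpace Ω)
    (μ : Measure Ω) [IsProbabilityMeasure μ]
    (hm : m ≤ m0) (ζ : Ω → ℝ) (hζ : Measurable[m0] ζ)
    (ρ ε : ℝ) (hρ0 : 0 < ρ) (hρ1 : ρ ≤ 1) (hε : 0 < ε)
    (hint2 : Integrable (fun ω => ζ ω^2) μ)
    (hint3 : Integrable (fun ω => |ζ ω|^(2+ρ) * Real.exp (max (ζ ω) 0 / ε)) μ)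
    (hbnd : ∀ᵐ ω ∂μ, (μ[fun ω => |ζ ω|^(2+ρ) * Real.exp (max (ζ ω) 0 / ε)|m]) ω
        ≤ ε^ρ * (μ[fun ω => ζ ω^2|m]) ω) :
    ∀ᵐ ω ∂μ, (μ[fun ω => ζ ω^2|m]) ω ≤ ε^2 := by
  have hVsm : StronglyMeasurable[m] (μ[fun ω => ζ ω^2|m]) := stronglyMeasurable_condExp
  set V := μ[fun ω => ζ ω^2|m] with hVdef
  have hVm : Measurable[m] V := hVsm.measurable
  have hexp1 : ∀ ω, (1:ℝ) ≤ Real.exp (max (ζ ω) 0 / ε) := by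
    intro ω
    rw [← Real.exp_zero]
    apply Real.exp_le_exp.2
    positivity
  have habs_meas : Measurable[m0] (fun ω => |ζ ω|^(2+ρ)) :=
    (Real.continuous_rpow_const (by positivity : (0:ℝ) ≤ 2+ρ)).measurable.comp hζ.abs
  have h7 : Integrable (fun ω => |ζ ω|^(2+ρ)) μ := by
    apply hint3.mono habs_meas.aestronglyMeasurable
    apply Filter.Eventually.of_forall
    intro ω
    rw [Real.norm_eq_abs, Real.norm_eq_abs, abs_of_nonneg (by positivity),
      abs_of_nonneg (by positivity : (0:ℝ) ≤ |ζ ω|^(2+ρ) * Real.exp (max (ζ ω) 0 / ε))]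
    exact le_mul_of_one_le_right (by positivity) (hexp1 ω)
  have key : ∀ a : ℝ, ε^2 < a → μ {ω | a ≤ V ω} = 0 := by
    intro a ha
    set B := {ω | a ≤ V ω} with hBdef
    have hB : MeasurableSet[m] B := hVm measurableSet_Ici
    have hB0 : MeasurableSet[m0] B := hm _ hB
    by_contra hμB
    have hM : 0 < (μ B).toReal :=
      ENNReal.toReal_pos hμB (measure_ne_top μ B)
    set M := (μ B).toReal with hMdef
    set I := ∫ ω in B, V ω ∂μ with hIdef
    have I5 : a * M ≤ I := by
      have h := setIntegral_mono_on
        (integrableOn_const (C := a) (measure_ne_top μ B) enorm_ne_top)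
        (integrable_condExp.integrableOn) hB0 (fun ω hω => hω)
      rwa [setIntegral_const, smul_eq_mul, mul_comm] at h
    have hapos : 0 < a := lt_of_le_of_lt (by positivity) ha
    have hIpos : 0 < I := lt_of_lt_of_le (by positivity) I5
    have I1 : I = ∫ ω in B, ζ ω^2 ∂μ := setIntegral_condExp hm hint2 hB
    have I4 : ∫ ω in B, |ζ ω|^(2+ρ) ∂μ
        ≤ ∫ ω in B, |ζ ω|^(2+ρ) * Real.exp (max (ζ ω) 0 / ε) ∂μ := by
      apply setIntegral_mono_on h7.integrableOn hint3.integrableOn hB0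
      intro ω _
      exact le_mul_of_one_le_right (by positivity) (hexp1 ω)
    have I2 : ∫ ω in B, |ζ ω|^(2+ρ) * Real.exp (max (ζ ω) 0 / ε) ∂μ ≤ ε^ρ * I := by
      rw [← setIntegral_condExp hm hint3 hB]
      calc ∫ ω in B, (μ[fun ω => |ζ ω|^(2+ρ) * Real.exp (max (ζ ω) 0 / ε)|m]) ω ∂μ
          ≤ ∫ ω in B, ε^ρ * V ω ∂μ := by
            apply setIntegral_mono_ae_restrict
              integrable_condExp.integrableOn
              (integrable_condExp.const_mul _).integrableOn
              (ae_restrict_of_ae hbnd)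
        _ = ε^ρ * I := by rw [hIdef, ← integral_const_mul]
    have I24 : ∫ ω in B, |ζ ω|^(2+ρ) ∂μ ≤ ε^ρ * I := le_trans I4 I2
    have hH := holder_step Ω m0 (μ.restrict B) ζ hζ ρ hρ0 hρ1
      hint2.integrableOn h7.integrableOn
    rw [Measure.restrict_apply_univ] at hH
    have hInonneg : (0:ℝ) ≤ ∫ ω in B, |ζ ω|^(2+ρ) ∂μ :=
      integral_nonneg fun ω => by positivity
    have hchain : I ≤ (ε^ρ * I)^(2/(2+ρ)) * M^(ρ/(2+ρ)) := by
      calc I = ∫ ω in B, ζ ω^2 ∂μ := I1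
        _ ≤ (∫ ω in B, |ζ ω|^(2+ρ) ∂μ)^(2/(2+ρ)) * M^(ρ/(2+ρ)) := hH
        _ ≤ (ε^ρ * I)^(2/(2+ρ)) * M^(ρ/(2+ρ)) := by
            apply mul_le_mul_of_nonneg_right _ (Real.rpow_nonneg hM.le _)
            exact Real.rpow_le_rpow hInonneg I24 (by positivity)
    have h2ρ : (0:ℝ) < 2 + ρ := by linarith
    have hIs : I = I^(2/(2+ρ)) * I^(ρ/(2+ρ)) := by
      rw [← Real.rpow_add hIpos]
      rw [show 2/(2+ρ) + ρ/(2+ρ) = 1 by field_simp]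
      exact (Real.rpow_one I).symm
    have hsplit : (ε^ρ * I)^(2/(2+ρ)) = (ε^ρ)^(2/(2+ρ)) * I^(2/(2+ρ)) :=
      Real.mul_rpow (by positivity) hIpos.le
    have hcancel : I^(ρ/(2+ρ)) ≤ (ε^ρ)^(2/(2+ρ)) * M^(ρ/(2+ρ)) := by
      have hpos : (0:ℝ) < I^(2/(2+ρ)) := Real.rpow_pos_of_pos hIpos _
      apply le_of_mul_le_mul_left _ hpos
      calc I^(2/(2+ρ)) * I^(ρ/(2+ρ)) = I := hIs.symm
        _ ≤ (ε^ρ * I)^(2/(2+ρ)) * M^(ρ/(2+ρ)) := hchain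
        _ = I^(2/(2+ρ)) * ((ε^ρ)^(2/(2+ρ)) * M^(ρ/(2+ρ))) := by rw [hsplit]; ring
    have heq : (ε^ρ)^(2/(2+ρ)) = (ε^2)^(ρ/(2+ρ)) := by
      rw [← Real.rpow_natCast ε 2, ← Real.rpow_mul hε.le, ← Real.rpow_mul hε.le]
      congr 1
      push_cast
      field_simp
    have hfinal : I^(ρ/(2+ρ)) ≤ (ε^2 * M)^(ρ/(2+ρ)) := by
      rw [Real.mul_rpow (by positivity) hM.le, ← heq]
      exact hcancel
    have hIa : I ≤ ε^2 * M :=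
      (Real.rpow_le_rpow_iff hIpos.le (by positivity)
        (by positivity : (0:ℝ) < ρ/(2+ρ))).1 hfinal
    have h5 : a * M ≤ ε^2 * M := le_trans I5 hIa
    have h6 : a ≤ ε^2 := le_of_mul_le_mul_right (by linarith) hM
    linarith
  rw [ae_iff]
  have hsub : {ω | ¬ V ω ≤ ε^2} ⊆ ⋃ k : ℕ, {ω | ε^2 + 1/((k:ℝ)+1) ≤ V ω} := by
    intro ω hω
    simp only [Set.mem_setOf_eq, not_le] at hω
    obtain ⟨k, hk⟩ := exists_nat_one_div_lt (by linarith : (0:ℝ) < V ω - ε^2)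
    refine Set.mem_iUnion.2 ⟨k, ?_⟩
    simp only [Set.mem_setOf_eq]
    push_cast at hk ⊢
    linarith
  exact measure_mono_null hsub (measure_iUnion_null fun k => key _
    (by
      have hpos : (0:ℝ) < 1/((k:ℝ)+1) := by positivity
      linarith))

lemma per_step (Ω : Type) (m : MeasurableSpace Ω) (m0 : MeasurableSpace Ω)
    (μ : Measure Ω) [IsProbabilityMeasure μ] (hm : m ≤ m0)
    (ζ : Ω → ℝ) (hζ : Measurable[m0] ζ)
    (ρ ε lam : ℝ) (hρ0 : 0 < ρ) (hρ1 : ρ ≤ 1) (hε : 0 < ε) (hlam : 0 < lam)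
    (hlamε : lam * ε ≤ 1)
    (hint1 : Integrable ζ μ)
    (hint2 : Integrable (fun ω => ζ ω^2) μ)
    (hint3 : Integrable (fun ω => |ζ ω|^(2+ρ) * Real.exp (max (ζ ω) 0 / ε)) μ)
    (hint4 : Integrable (fun ω => Real.exp (lam * ζ ω)) μ)
    (hcond : μ[ζ|m] =ᵐ[μ] 0)
    (hbnd : ∀ᵐ ω ∂μ, (μ[fun ω => |ζ ω|^(2+ρ) * Real.exp (max (ζ ω) 0 / ε)|m]) ω
        ≤ ε^ρ * (μ[fun ω => ζ ω^2|m]) ω) :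
    ∀ᵐ ω ∂μ, |Real.log ((μ[fun ω => Real.exp (lam * ζ ω)|m]) ω)
        - lam^2/2 * (μ[fun ω => ζ ω^2|m]) ω|
      ≤ 13/4 * (lam^(2+ρ) * ε^ρ) * (μ[fun ω => ζ ω^2|m]) ω := by
  -- pointwise bound on the remainder
  have hpt : ∀ ω, |Real.exp (lam * ζ ω) - (1 + lam * ζ ω + lam^2/2 * ζ ω^2)|
      ≤ lam^(2+ρ) * (|ζ ω|^(2+ρ) * Real.exp (max (ζ ω) 0 / ε)) := by
    intro ω
    have h := exp_taylor_bound hρ0 hρ1 (lam * ζ ω)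
    have e1 : Real.exp (lam * ζ ω) - 1 - lam * ζ ω - (lam * ζ ω)^2/2
        = Real.exp (lam * ζ ω) - (1 + lam * ζ ω + lam^2/2 * ζ ω^2) := by ring
    rw [e1] at h
    have e2 : |lam * ζ ω|^(2+ρ) = lam^(2+ρ) * |ζ ω|^(2+ρ) := by
      rw [abs_mul, abs_of_pos hlam, Real.mul_rpow hlam.le (abs_nonneg _)]
    have e3 : Real.exp (max (lam * ζ ω) 0) ≤ Real.exp (max (ζ ω) 0 / ε) := by
      apply Real.exp_le_exp.2
      have hmax : 0 ≤ max (ζ ω) 0 := le_max_right _ _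
      have h0 : max (lam * ζ ω) 0 = lam * max (ζ ω) 0 := by
        rw [mul_max_of_nonneg _ _ hlam.le, mul_zero]
      have hlamε' : lam ≤ ε⁻¹ := by
        rw [← one_div]
        exact (le_div_iff₀ hε).2 hlamε
      rw [h0, div_eq_mul_inv, mul_comm (max (ζ ω) 0) ε⁻¹]
      exact mul_le_mul_of_nonneg_right hlamε' hmax
    calc |Real.exp (lam * ζ ω) - (1 + lam * ζ ω + lam^2/2 * ζ ω^2)|
        ≤ |lam * ζ ω|^(2+ρ) * Real.exp (max (lam * ζ ω) 0) := h
      _ ≤ |lam * ζ ω|^(2+ρ) * Real.exp (max (ζ ω) 0 / ε) := by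
          apply mul_le_mul_of_nonneg_left e3 (Real.rpow_nonneg (abs_nonneg _) _)
      _ = lam^(2+ρ) * (|ζ ω|^(2+ρ) * Real.exp (max (ζ ω) 0 / ε)) := by rw [e2]; ring
  -- integrability
  have hint_lin : Integrable (fun ω => 1 + lam * ζ ω) μ :=
    (integrable_const (1:ℝ)).add (hint1.const_mul lam)
  have hint_poly : Integrable (fun ω => 1 + lam * ζ ω + lam^2/2 * ζ ω^2) μ :=
    hint_lin.add (hint2.const_mul _)
  have hr : Integrable (fun ω => Real.exp (lam * ζ ω)
      - (1 + lam * ζ ω + lam^2/2 * ζ ω^2)) μ := hint4.sub hint_poly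
  -- conditional expectation of the linear+quadratic part
  have hsmul : μ[fun ω => lam * ζ ω|m] =ᵐ[μ] fun ω => lam * (μ[ζ|m]) ω := by
    have h := condExp_smul (μ := μ) (m := m) lam ζ
    exact h
  have hsq : μ[fun ω => lam^2/2 * ζ ω^2|m]
      =ᵐ[μ] fun ω => lam^2/2 * (μ[fun ω => ζ ω^2|m]) ω := by
    have h := condExp_smul (μ := μ) (m := m) (lam^2/2) (fun ω => ζ ω^2)
    exact h
  have hconst : μ[fun _ : Ω => (1:ℝ)|m] = fun _ => 1 := condExp_const hm (1:ℝ)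
  have hlin : μ[fun ω => 1 + lam * ζ ω|m] =ᵐ[μ] fun _ => 1 := by
    have h := condExp_add (μ := μ) (m := m) (integrable_const (1:ℝ)) (hint1.const_mul lam)
    filter_upwards [h, hsmul, hcond] with ω h1 h3 h4
    have e : (fun ω => 1 + lam * ζ ω) = (fun _ : Ω => (1:ℝ)) + fun ω => lam * ζ ω := rfl
    rw [e, h1]
    simp only [Pi.add_apply]
    rw [hconst, h3, h4]
    simp
  have hpoly : μ[fun ω => 1 + lam * ζ ω + lam^2/2 * ζ ω^2|m]
      =ᵐ[μ] fun ω => 1 + lam^2/2 * (μ[fun ω => ζ ω^2|m]) ω := by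
    have h := condExp_add (μ := μ) (m := m) hint_lin (hint2.const_mul (lam^2/2))
    filter_upwards [h, hlin, hsq] with ω h1 h2 h3
    have e : (fun ω => 1 + lam * ζ ω + lam^2/2 * ζ ω^2)
        = (fun ω => 1 + lam * ζ ω) + fun ω => lam^2/2 * ζ ω^2 := rfl
    rw [e, h1]
    simp only [Pi.add_apply]
    rw [h2, h3]
  -- conditional expectation of the remainder equals Y - (1 + lam^2/2 V)
  have hrcond : μ[fun ω => Real.exp (lam * ζ ω) - (1 + lam * ζ ω + lam^2/2 * ζ ω^2)|m]
      =ᵐ[μ] fun ω => (μ[fun ω => Real.exp (lam * ζ ω)|m]) ω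
        - (1 + lam^2/2 * (μ[fun ω => ζ ω^2|m]) ω) := by
    have h := condExp_sub (μ := μ) (m := m) hint4 hint_poly
    filter_upwards [h, hpoly] with ω h1 h2
    have e : (fun ω => Real.exp (lam * ζ ω) - (1 + lam * ζ ω + lam^2/2 * ζ ω^2))
        = (fun ω => Real.exp (lam * ζ ω)) - fun ω => 1 + lam * ζ ω + lam^2/2 * ζ ω^2 := rfl
    rw [e, h1]
    simp only [Pi.sub_apply]
    rw [h2]
  -- bound |E[r|m]| by lam^(2+ρ) * E[g0|m]
  have hg0int : Integrable (fun ω => lam^(2+ρ)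
      * (|ζ ω|^(2+ρ) * Real.exp (max (ζ ω) 0 / ε))) μ := hint3.const_mul _
  have hg0cond : μ[fun ω => lam^(2+ρ) * (|ζ ω|^(2+ρ) * Real.exp (max (ζ ω) 0 / ε))|m]
      =ᵐ[μ] fun ω => lam^(2+ρ)
        * (μ[fun ω => |ζ ω|^(2+ρ) * Real.exp (max (ζ ω) 0 / ε)|m]) ω := by
    have h := condExp_smul (μ := μ) (m := m) (lam^(2+ρ))
      (fun ω => |ζ ω|^(2+ρ) * Real.exp (max (ζ ω) 0 / ε))
    exact h
  have hup := condExp_mono (μ := μ) (m := m) hr hg0int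
    (Filter.Eventually.of_forall fun ω => (abs_le.1 (hpt ω)).2)
  have hneg : μ[(-fun ω => lam^(2+ρ) * (|ζ ω|^(2+ρ) * Real.exp (max (ζ ω) 0 / ε)))|m]
      =ᵐ[μ] -(μ[fun ω => lam^(2+ρ)
        * (|ζ ω|^(2+ρ) * Real.exp (max (ζ ω) 0 / ε))|m]) :=
    condExp_neg _ _
  have hdn := condExp_mono (μ := μ) (m := m) hg0int.neg hr
    (Filter.Eventually.of_forall fun ω => neg_le_of_abs_le (hpt ω))
  -- Y ≥ 1
  have hr2 : Integrable (fun ω => Real.exp (lam * ζ ω) - (1 + lam * ζ ω)) μ :=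
    hint4.sub hint_lin
  have hr2cond : μ[fun ω => Real.exp (lam * ζ ω) - (1 + lam * ζ ω)|m]
      =ᵐ[μ] fun ω => (μ[fun ω => Real.exp (lam * ζ ω)|m]) ω - 1 := by
    have h := condExp_sub (μ := μ) (m := m) hint4 hint_lin
    filter_upwards [h, hlin] with ω h1 h2
    have e : (fun ω => Real.exp (lam * ζ ω) - (1 + lam * ζ ω))
        = (fun ω => Real.exp (lam * ζ ω)) - fun ω => 1 + lam * ζ ω := rfl
    rw [e, h1]
    simp only [Pi.sub_apply]
    rw [h2]
  have hr2pos := condExp_nonneg (μ := μ) (m := m)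
    (Filter.Eventually.of_forall (fun ω => by
      have := Real.add_one_le_exp (lam * ζ ω)
      linarith : ∀ ω, (0:ℝ) ≤ Real.exp (lam * ζ ω) - (1 + lam * ζ ω)))
  -- V ≥ 0 and V ≤ ε²
  have hV0 := condExp_nonneg (μ := μ) (m := m)
    (Filter.Eventually.of_forall (fun ω => sq_nonneg (ζ ω) : ∀ ω, (0:ℝ) ≤ ζ ω^2))
  have hVε := var_le_sq Ω m m0 μ hm ζ hζ ρ ε hρ0 hρ1 hε hint2 hint3 hbnd
  -- combine everything
  filter_upwards [hrcond, hup, hdn, hneg, hg0cond, hbnd, hr2cond, hr2pos, hV0, hVε]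
    with ω h1 h2 h3 h4 h5 h6 h7 h8 h9 h10
  have hY1 : 1 ≤ (μ[fun ω => Real.exp (lam * ζ ω)|m]) ω := by
    have := h8
    simp only [Pi.zero_apply] at this
    rw [h7] at this
    linarith
  have hV0' : 0 ≤ (μ[fun ω => ζ ω^2|m]) ω := by
    have := h9; simp only [Pi.zero_apply] at this; exact this
  have hYV : |(μ[fun ω => Real.exp (lam * ζ ω)|m]) ω
      - (1 + lam^2/2 * (μ[fun ω => ζ ω^2|m]) ω)|
      ≤ lam^(2+ρ) * ε^ρ * (μ[fun ω => ζ ω^2|m]) ω := by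
    rw [abs_le]
    constructor
    · have hd := h3
      rw [h4] at hd
      simp only [Pi.neg_apply] at hd
      rw [h5] at hd
      rw [h1] at hd
      have hb : lam^(2+ρ) * (μ[fun ω => |ζ ω|^(2+ρ) * Real.exp (max (ζ ω) 0 / ε)|m]) ω
          ≤ lam^(2+ρ) * (ε^ρ * (μ[fun ω => ζ ω^2|m]) ω) :=
        mul_le_mul_of_nonneg_left h6 (Real.rpow_nonneg hlam.le _)
      have e : lam^(2+ρ) * ε^ρ * (μ[fun ω => ζ ω^2|m]) ω
          = lam^(2+ρ) * (ε^ρ * (μ[fun ω => ζ ω^2|m]) ω) := by ring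
      rw [e]
      linarith
    · have hu := h2
      rw [h5, h1] at hu
      have hb : lam^(2+ρ) * (μ[fun ω => |ζ ω|^(2+ρ) * Real.exp (max (ζ ω) 0 / ε)|m]) ω
          ≤ lam^(2+ρ) * (ε^ρ * (μ[fun ω => ζ ω^2|m]) ω) :=
        mul_le_mul_of_nonneg_left h6 (Real.rpow_nonneg hlam.le _)
      have e : lam^(2+ρ) * ε^ρ * (μ[fun ω => ζ ω^2|m]) ω
          = lam^(2+ρ) * (ε^ρ * (μ[fun ω => ζ ω^2|m]) ω) := by ring
      rw [e]
      linarith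
  exact core_est hρ0 hρ1 hε hlam hlamε hY1 hV0' h10 hYV


theorem cumulant_process_bound :
    ∃ c : ℝ, 0 < c ∧
      ∀ (Ω : Type) (m0 : MeasurableSpace Ω) (μ : Measure Ω),
        IsProbabilityMeasure μ →
      ∀ (n : ℕ) (ξ : ℕ → Ω → ℝ) (𝓕 : ℕ → MeasurableSpace Ω),
        (∀ i, 𝓕 i ≤ m0) → Monotone 𝓕 →
      ∀ (ρ ε δ : ℝ), 0 < ρ → ρ ≤ 1 → 0 < ε → ε ≤ 1 / 2 → 0 ≤ δ → δ ≤ 1 / 2 →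
        (∀ i ∈ Icc 1 n, Measurable[𝓕 i] (ξ i)) →
        (∀ i ∈ Icc 1 n, Integrable (ξ i) μ) →
        (∀ i ∈ Icc 1 n, μ[ξ i|𝓕 (i - 1)] =ᵐ[μ] 0) →
        (∀ i ∈ Icc 1 n, Integrable (fun ω => (ξ i ω) ^ 2) μ) →
        (∀ i ∈ Icc 1 n,
          Integrable (fun ω => |ξ i ω| ^ (2 + ρ) * Real.exp (max (ξ i ω) 0 / ε)) μ) →
        (∀ i ∈ Icc 1 n, ∀ᵐ ω ∂μ,
          (μ[fun ω => |ξ i ω| ^ (2 + ρ) * Real.exp (max (ξ i ω) 0 / ε)|𝓕 (i - 1)]) ω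
            ≤ ε ^ ρ * (μ[fun ω => (ξ i ω) ^ 2|𝓕 (i - 1)]) ω) →
        (∀ᵐ ω ∂μ,
          |(∑ i ∈ Icc 1 n, (μ[fun ω => (ξ i ω) ^ 2|𝓕 (i - 1)]) ω) - 1| ≤ δ ^ 2) →
      ∀ (lam : ℝ), 0 ≤ lam → lam ≤ 1 / ε →
        (∀ i ∈ Icc 1 n, Integrable (fun ω => Real.exp (lam * ξ i ω)) μ) →
        ∀ᵐ ω ∂μ,
          |(∑ i ∈ Icc 1 n,
              Real.log ((μ[fun ω => Real.exp (lam * ξ i ω)|𝓕 (i - 1)]) ω))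
              - lam ^ 2 / 2|
            ≤ c * lam ^ (2 + ρ) * ε ^ ρ + lam ^ 2 * δ ^ 2 / 2 := by
  refine ⟨5, by norm_num, ?_⟩
  intro Ω m0 μ hprob n ξ 𝓕 h𝓕 _hmono ρ ε δ hρ0 hρ1 hε _hε2 hδ0 hδ1 hmeas hint1 hcond
    hint2 hint3 hbnd hsum lam hlam0 hlam1 hint4
  rcases hlam0.eq_or_lt with heq | hlam
  · -- lam = 0
    subst heq
    apply Filter.Eventually.of_forall
    intro ω
    have hz : ∀ i ∈ Icc 1 n,
        Real.log ((μ[fun ω => Real.exp (0 * ξ i ω)|𝓕 (i - 1)]) ω) = 0 := by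
      intro i _hi
      have e : (fun ω => Real.exp (0 * ξ i ω)) = fun _ : Ω => (1:ℝ) := by
        funext ω'; simp
      rw [e, condExp_const (h𝓕 (i-1))]
      simp
    rw [Finset.sum_congr rfl hz]
    have h0 : (0:ℝ)^(2+ρ) = 0 := Real.zero_rpow (by positivity)
    simp [h0]
  · -- lam > 0
    have hlamε : lam * ε ≤ 1 := by
      have := (le_div_iff₀ hε).1 hlam1
      linarith
    have hper : ∀ i ∈ Icc 1 n, ∀ᵐ ω ∂μ,
        |Real.log ((μ[fun ω => Real.exp (lam * ξ i ω)|𝓕 (i - 1)]) ω)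
          - lam^2/2 * (μ[fun ω => (ξ i ω)^2|𝓕 (i - 1)]) ω|
        ≤ 13/4 * (lam^(2+ρ) * ε^ρ) * (μ[fun ω => (ξ i ω)^2|𝓕 (i - 1)]) ω := by
      intro i hi
      exact per_step Ω (𝓕 (i-1)) m0 μ (h𝓕 (i-1)) (ξ i)
        ((hmeas i hi).mono (h𝓕 i) le_rfl) ρ ε lam hρ0 hρ1 hε hlam hlamε
        (hint1 i hi) (hint2 i hi) (hint3 i hi) (hint4 i hi) (hcond i hi) (hbnd i hi)
    have hall : ∀ᵐ ω ∂μ, ∀ i, i ∈ Icc 1 n →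
        |Real.log ((μ[fun ω => Real.exp (lam * ξ i ω)|𝓕 (i - 1)]) ω)
          - lam^2/2 * (μ[fun ω => (ξ i ω)^2|𝓕 (i - 1)]) ω|
        ≤ 13/4 * (lam^(2+ρ) * ε^ρ) * (μ[fun ω => (ξ i ω)^2|𝓕 (i - 1)]) ω := by
      rw [ae_all_iff]
      intro i
      by_cases hi : i ∈ Icc 1 n
      · filter_upwards [hper i hi] with ω h _
        exact h
      · exact Filter.Eventually.of_forall fun ω hmem => absurd hmem hi
    filter_upwards [hall, hsum] with ω hallω hsumω
    set K := lam^(2+ρ) * ε^ρ with hKdef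
    have hK0 : 0 ≤ K := by rw [hKdef]; positivity
    set SV := ∑ i ∈ Icc 1 n, (μ[fun ω => (ξ i ω)^2|𝓕 (i - 1)]) ω with hSVdef
    set SL := ∑ i ∈ Icc 1 n,
      Real.log ((μ[fun ω => Real.exp (lam * ξ i ω)|𝓕 (i - 1)]) ω) with hSLdef
    have hstep1 : |SL - lam^2/2 * SV| ≤ 13/4 * K * SV := by
      rw [hSLdef, hSVdef, Finset.mul_sum, ← Finset.sum_sub_distrib]
      calc |∑ i ∈ Icc 1 n,
            (Real.log ((μ[fun ω => Real.exp (lam * ξ i ω)|𝓕 (i - 1)]) ω)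
              - lam^2/2 * (μ[fun ω => (ξ i ω)^2|𝓕 (i - 1)]) ω)|
          ≤ ∑ i ∈ Icc 1 n,
            |Real.log ((μ[fun ω => Real.exp (lam * ξ i ω)|𝓕 (i - 1)]) ω)
              - lam^2/2 * (μ[fun ω => (ξ i ω)^2|𝓕 (i - 1)]) ω| :=
            Finset.abs_sum_le_sum_abs _ _
        _ ≤ ∑ i ∈ Icc 1 n,
            13/4 * K * (μ[fun ω => (ξ i ω)^2|𝓕 (i - 1)]) ω :=
            Finset.sum_le_sum fun i hi => hallω i hi
        _ = 13/4 * K * ∑ i ∈ Icc 1 n, (μ[fun ω => (ξ i ω)^2|𝓕 (i - 1)]) ω := by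
            rw [Finset.mul_sum]
    have hSVle : SV ≤ 1 + δ^2 := by
      have := (abs_le.1 hsumω).2
      linarith
    have hδ2 : δ^2 ≤ 1/4 := by nlinarith
    have habs : |SL - lam^2/2| ≤ |SL - lam^2/2 * SV| + lam^2/2 * |SV - 1| := by
      have e : SL - lam^2/2 = (SL - lam^2/2 * SV) + lam^2/2 * (SV - 1) := by ring
      rw [e]
      refine (abs_add_le _ _).trans ?_
      rw [abs_mul, abs_of_nonneg (by positivity : (0:ℝ) ≤ lam^2/2)]
    have hsum' : |SV - 1| ≤ δ^2 := hsumω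
    have hfinal : |SL - lam^2/2| ≤ 5 * K + lam^2 * δ^2/2 := by
      have h1 : 13/4 * K * SV ≤ 13/4 * K * (5/4) := by
        apply mul_le_mul_of_nonneg_left _ (by positivity)
        linarith
      have h2 : lam^2/2 * |SV - 1| ≤ lam^2/2 * δ^2 := by
        apply mul_le_mul_of_nonneg_left hsum' (by positivity)
      calc |SL - lam^2/2| ≤ |SL - lam^2/2 * SV| + lam^2/2 * |SV - 1| := habs
        _ ≤ 13/4 * K * SV + lam^2/2 * δ^2 := by linarith [hstep1]
        _ ≤ 13/4 * K * (5/4) + lam^2/2 * δ^2 := by linarith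
        _ ≤ 5 * K + lam^2 * δ^2/2 := by nlinarith [hK0]
    calc |SL - lam^2/2| ≤ 5 * K + lam^2 * δ^2/2 := hfinal
      _ = 5 * lam^(2+ρ) * ε^ρ + lam^2 * δ^2/2 := by rw [hKdef]; ring
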